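/- Let n, H ≥ 1 be natural numbers. Then there exists a natural number N = N_∞(n, H) such that for any permutations σ_1, …, σ_H of {1, …, n}, there exist subsets A_1, …, A_n of the integer interval [N] = {0, 1, …, N} ⊆ ℤ such that for each 1 ≤ h ≤ H and all 1 ≤ j, k ≤ n, one has |hA_j| < |hA_k| if and only if σ_h(j) < σ_h(k). -/

import Mathlib

open Pointwise Finset

lemma IccAddIcc (a b c d : ℤ) (h1 : a ≤ b) (h2 : c ≤ d) :
    Icc a b + Icc c d = Icc (a+c) (b+d) := by
  apply subset_antisymm
  · intro z hz
    rw [Finset.mem_add] at hz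
    obtain ⟨x, hx, y, hy, rfl⟩ := hz
    simp only [mem_Icc] at *
    omega
  · intro z hz
    simp only [mem_Icc] at hz
    rw [Finset.mem_add]
    refine ⟨max a (z - d), ?_, z - max a (z - d), ?_, by ring⟩
    · simp only [mem_Icc, le_max_iff, max_le_iff]; omega
    · simp only [mem_Icc, le_max_iff, max_le_iff]; omega

lemma nsmulIcc (a b : ℤ) (hab : a ≤ b) : ∀ i : ℕ, i • Icc a b = Icc (i*a) (i*b)
  | 0 => by norm_num [zero_nsmul]; rfl
  | (i+1) => by
      rw [succ_nsmul, nsmulIcc a b hab i, IccAddIcc _ _ _ _ (by nlinarith [Int.natCast_nonneg i]) hab]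
      congr 1 <;> push_cast <;> ring

lemma nsmul_insert_zero (C : Finset ℤ) : ∀ h : ℕ,
    h • (insert (0:ℤ) C) = (Finset.range (h+1)).biUnion (fun i => i • C)
  | 0 => by norm_num [zero_nsmul]
  | (h+1) => by
      rw [succ_nsmul, nsmul_insert_zero C h, Finset.insert_eq, Finset.add_union]
      ext z
      simp only [Finset.mem_union, Finset.mem_biUnion, Finset.mem_range, Finset.mem_add]
      constructor
      · rintro (hz | hz)
        · obtain ⟨x, hx, y, hy, rfl⟩ := hz
          obtain ⟨i, hi, hx⟩ := hx
          simp only [Finset.mem_singleton] at hy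
          subst hy
          exact ⟨i, by omega, by simpa using hx⟩
        · obtain ⟨x, hx, y, hy, rfl⟩ := hz
          obtain ⟨i, hi, hx⟩ := hx
          refine ⟨i+1, by omega, ?_⟩
          rw [succ_nsmul]
          exact Finset.add_mem_add hx hy
      · rintro ⟨i, hi, hz⟩
        rcases Nat.lt_or_ge i (h+1) with hi' | hi'
        · exact Or.inl ⟨z, ⟨i, hi', hz⟩, 0, by simp, by ring⟩
        · have hieq : i = h + 1 := by omega
          subst hieq
          rw [succ_nsmul] at hz
          rw [Finset.mem_add] at hz
          obtain ⟨x, hx, y, hy, rfl⟩ := hz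
          exact Or.inr ⟨x, ⟨h, by omega, hx⟩, y, hy, rfl⟩

noncomputable section
/-- dilation -/
def dil (c : ℤ) (S : Finset ℤ) : Finset ℤ := S.image (fun t => c * t)

lemma mem_dil {c : ℤ} {S : Finset ℤ} {z : ℤ} : z ∈ dil c S ↔ ∃ t ∈ S, c * t = z := by
  simp [dil]

lemma dil_add (c : ℤ) (X Y : Finset ℤ) : dil c (X + Y) = dil c X + dil c Y := by
  ext z
  simp only [mem_dil, Finset.mem_add]
  constructor
  · rintro ⟨t, ⟨x, hx, y, hy, rfl⟩, rfl⟩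
    exact ⟨c*x, ⟨x, hx, rfl⟩, c*y, ⟨y, hy, rfl⟩, by ring⟩
  · rintro ⟨u, ⟨x, hx, rfl⟩, v, ⟨y, hy, rfl⟩, rfl⟩
    exact ⟨x + y, ⟨x, hx, y, hy, rfl⟩, by ring⟩

lemma dil_zero (c : ℤ) : dil c ({0} : Finset ℤ) = {0} := by
  simp [dil]

lemma nsmul_dil (c : ℤ) (Y : Finset ℤ) : ∀ h : ℕ, h • dil c Y = dil c (h • Y)
  | 0 => by rw [zero_nsmul, zero_nsmul]; exact (dil_zero c).symm
  | (h+1) => by rw [succ_nsmul, succ_nsmul, nsmul_dil c Y h, dil_add]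

lemma card_dil (c : ℤ) (hc : c ≠ 0) (S : Finset ℤ) : (dil c S).card = S.card :=
  Finset.card_image_of_injective _ (fun a b hab => by
    exact mul_left_cancel₀ hc hab)

/-- no-carry multiplication of cardinalities -/
lemma card_add_dil (c : ℤ) (X Y : Finset ℤ) (hX : ∀ x ∈ X, 0 ≤ x ∧ x < c) :
    (X + dil c Y).card = X.card * Y.card := by
  have heq : X + dil c Y = (X ×ˢ Y).image (fun p => p.1 + c * p.2) := by
    ext z
    simp only [Finset.mem_add, Finset.mem_image, Finset.mem_product, mem_dil]
    constructor
    · rintro ⟨x, hx, u, ⟨y, hy, rfl⟩, rfl⟩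
      exact ⟨(x, y), ⟨hx, hy⟩, rfl⟩
    · rintro ⟨⟨x, y⟩, ⟨hx, hy⟩, rfl⟩
      exact ⟨x, hx, c*y, ⟨y, hy, rfl⟩, rfl⟩
  rw [heq, Finset.card_image_of_injOn, Finset.card_product]
  rintro ⟨x, y⟩ hxy ⟨x', y'⟩ hxy' hEq
  simp only [Finset.mem_coe, Finset.mem_product] at hxy hxy'
  simp only at hEq
  obtain ⟨hx1, hx2⟩ := hX x hxy.1
  obtain ⟨hx1', hx2'⟩ := hX x' hxy'.1
  have hyy : y = y' := by
    rcases lt_trichotomy y y' with h | h | h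
    · exfalso
      have : c * (y' - y) = x - x' := by linarith
      have h1 : (1:ℤ) ≤ y' - y := by omega
      have : c ≤ c * (y' - y) := le_mul_of_one_le_right (by linarith) h1
      omega
    · exact h
    · exfalso
      have : c * (y - y') = x' - x := by linarith
      have h1 : (1:ℤ) ≤ y - y' := by omega
      have : c ≤ c * (y - y') := le_mul_of_one_le_right (by linarith) h1
      omega
  subst hyy
  have : x = x' := by linarith
  simp [this]

/-- scaled digit sum of a list of finsets -/
def scaledSum (c : ℤ) : List (Finset ℤ) → Finset ℤ
  | [] => {0}
  | S :: rest => S + dil c (scaledSum c rest)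

lemma nsmul_scaledSum (c : ℤ) (h : ℕ) : ∀ L : List (Finset ℤ),
    h • scaledSum c L = scaledSum c (L.map (fun S => h • S))
  | [] => by simp only [scaledSum, List.map_nil]
             rw [show ({0} : Finset ℤ) = (0 : Finset ℤ) from rfl, nsmul_zero]
  | S :: rest => by
      simp only [scaledSum, List.map_cons]
      rw [nsmul_add, nsmul_dil, nsmul_scaledSum c h rest]

lemma card_scaledSum (c : ℤ) (hc : 0 < c) : ∀ L : List (Finset ℤ),
    (∀ S ∈ L, ∀ x ∈ S, 0 ≤ x ∧ x < c) →
    (scaledSum c L).card = (L.map Finset.card).prod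
  | [], _ => by simp [scaledSum]
  | S :: rest, hL => by
      simp only [scaledSum, List.map_cons, List.prod_cons]
      rw [card_add_dil c S _ (hL S (by simp)),
        card_scaledSum c hc rest (fun T hT => hL T (by simp [hT]))]

lemma scaledSum_subset (c : ℤ) (hc : 0 < c) : ∀ L : List (Finset ℤ),
    (∀ S ∈ L, ∀ x ∈ S, 0 ≤ x ∧ x < c) →
    ∀ z ∈ scaledSum c L, 0 ≤ z ∧ z < c ^ L.length
  | [], _ => by intro z hz; simp [scaledSum] at hz; subst hz; simp [hc]
  | S :: rest, hL => by
      intro z hz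
      simp only [scaledSum, Finset.mem_add] at hz
      obtain ⟨x, hx, u, hu, rfl⟩ := hz
      obtain ⟨y, hy, rfl⟩ := mem_dil.1 hu
      obtain ⟨hy0, hy1⟩ := scaledSum_subset c hc rest
        (fun T hT => hL T (by simp [hT])) y hy
      obtain ⟨hx0, hx1⟩ := hL S (by simp) x hx
      constructor
      · positivity
      · have : c * y ≤ c * (c ^ rest.length - 1) :=
          mul_le_mul_of_nonneg_left (by omega) (le_of_lt hc)
        simp only [List.length_cons, pow_succ]
        nlinarith [pow_pos hc rest.length]
/-- disjoint-regime card sum -/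
def F0 (w h : ℕ) : ℕ := ∑ i ∈ Finset.range (h+1), (i*w+1)

lemma Icc_union_Icc_overlap (α β γ δ : ℤ) (h1 : α ≤ γ) (h2 : γ ≤ β + 1) (h3 : β ≤ δ) :
    Finset.Icc α β ∪ Finset.Icc γ δ = Finset.Icc α δ := by
  ext t; simp only [Finset.mem_union, Finset.mem_Icc]; omega

lemma disjoint_of_sub_Icc (A : Finset ℤ) (β γ δ : ℤ) (hA : A ⊆ Finset.Icc 0 β)
    (h : β < γ) : Disjoint A (Finset.Icc γ δ) := by
  rw [Finset.disjoint_left]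
  intro t ht ht'
  have := hA ht
  simp only [Finset.mem_Icc] at *
  omega

section gadget
variable (x w : ℕ)

/-- the union appearing as the h-fold sumset of the gadget -/
def U (h : ℕ) : Finset ℤ :=
  (Finset.range (h+1)).biUnion (fun i => Finset.Icc ((i:ℤ)*x) ((i:ℤ)*(x+w)))

lemma gadget_nsmul (h : ℕ) :
    h • (insert (0:ℤ) (Finset.Icc (x:ℤ) ((x:ℤ)+w))) = U x w h := by
  rw [nsmul_insert_zero]
  unfold U
  apply Finset.biUnion_congr rfl
  intro i _
  rw [nsmulIcc _ _ (le_add_of_nonneg_right (by positivity))]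

lemma U_subset (h : ℕ) : U x w h ⊆ Finset.Icc 0 ((h:ℤ)*(x+w)) := by
  apply Finset.biUnion_subset.2
  intro i hi
  simp only [Finset.mem_range] at hi
  have hih : (i:ℤ) ≤ h := by exact_mod_cast Nat.lt_succ_iff.1 hi
  have hnn : (0:ℤ) ≤ (x:ℤ)+w := by positivity
  refine Finset.Icc_subset_Icc (by nlinarith) (by nlinarith)

lemma card_Icc_block (i : ℕ) :
    (Finset.Icc ((i:ℤ)*x) ((i:ℤ)*(x+w))).card = i*w+1 := by
  rw [Int.card_Icc]
  have : (i:ℤ)*((x:ℤ)+w) + 1 - (i:ℤ)*x = (i*w+1 : ℕ) := by push_cast; ring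
  rw [this, Int.toNat_natCast]

lemma U_zero : U x w 0 = Finset.Icc 0 0 := by
  unfold U
  simp

lemma U_succ (h : ℕ) : U x w (h+1) = U x w h ∪
    Finset.Icc (((h+1 : ℕ):ℤ)*x) (((h+1 : ℕ):ℤ)*(x+w)) := by
  unfold U
  rw [Finset.range_add_one, Finset.biUnion_insert, Finset.union_comm]

lemma hw_lt_mul (h : ℕ) (hh : h*w + 2 ≤ x) : (h:ℤ)*(x+w) < ((h+1:ℕ):ℤ)*x := by
  have : (h:ℤ)*w + 2 ≤ x := by exact_mod_cast hh
  push_cast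
  nlinarith

/-- disjoint regime -/
lemma U_card_disjoint : ∀ h : ℕ, (∀ i : ℕ, i < h → i*w + 2 ≤ x) → (U x w h).card = F0 w h := by
  intro h
  induction h with
  | zero => intro _; rw [U_zero]; simp [F0]
  | succ h ih =>
      intro hgap
      rw [U_succ, Finset.card_union_of_disjoint, card_Icc_block,
        ih (fun i hi => hgap i (by omega))]
      · simp only [F0, Finset.sum_range_succ]
      · exact disjoint_of_sub_Icc _ ((h:ℤ)*(x+w)) _ _ (U_subset x w h)
          (hw_lt_mul x w h (hgap h (by omega)))

/-- merged regime: shape of the union -/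
lemma U_merged_shape (g : ℕ) (hx2 : x ≤ (g+1)*w + 1) :
    ∀ h : ℕ, g + 1 ≤ h → U x w h = U x w g ∪ Finset.Icc (((g+1:ℕ):ℤ)*x) ((h:ℤ)*(x+w)) := by
  intro h hgh
  induction h, hgh using Nat.le_induction with
  | base => exact U_succ x w g
  | succ h hgh ih =>
      rw [U_succ, ih, Finset.union_assoc,
        Icc_union_Icc_overlap _ _ _ _ ?h1 ?h2 ?h3]
      case h1 =>
        have : ((g+1:ℕ):ℤ) ≤ ((h+1:ℕ):ℤ) := by exact_mod_cast by omega
        have : (0:ℤ) ≤ x := by positivity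
        push_cast at *
        nlinarith
      case h2 =>
        have hxh : (x:ℤ) ≤ (h:ℤ)*w + 1 := by
          have : x ≤ h*w + 1 := le_trans hx2 (by
            have : (g+1)*w ≤ h*w := Nat.mul_le_mul_right w hgh
            omega)
          exact_mod_cast this
        push_cast
        nlinarith
      case h3 =>
        have : (h:ℤ) ≤ ((h+1:ℕ):ℤ) := by exact_mod_cast by omega
        have hnn : (0:ℤ) ≤ (x:ℤ)+w := by positivity
        push_cast at *
        nlinarith

/-- merged regime cardinality -/
lemma U_card_merged (g h : ℕ) (hx1 : g*w + 2 ≤ x) (hx2 : x ≤ (g+1)*w + 1)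
    (hgh : g + 1 ≤ h) :
    (U x w h).card = F0 w g + ((h-g-1)*x + h*w + 1) := by
  rw [U_merged_shape x w g hx2 h hgh, Finset.card_union_of_disjoint, U_card_disjoint]
  · congr 1
    rw [Int.card_Icc]
    have : (h:ℤ)*((x:ℤ)+w) + 1 - ((g+1:ℕ):ℤ)*x = (((h-g-1)*x + h*w + 1 : ℕ) : ℤ) := by
      have h1 : ((h-g-1 : ℕ):ℤ) = (h:ℤ) - g - 1 := by omega
      push_cast [h1]
      ring
    rw [this, Int.toNat_natCast]
  · intro i hi
    have : i*w ≤ g*w := Nat.mul_le_mul_right w (by omega)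
    omega
  · exact disjoint_of_sub_Icc _ ((g:ℤ)*(x+w)) _ _ (U_subset x w g)
      (hw_lt_mul x w g hx1)
end gadget
/-- the level set: level 0 is an interval, level `d ≥ 1` is `{0} ∪ [x, x+w]`. -/
noncomputable def Tset (w d a : ℕ) : Finset ℤ :=
  if d = 0 then Finset.Icc 0 (((w + a : ℕ)):ℤ)
  else insert 0 (Finset.Icc (((d-1)*w + 1 + a : ℕ):ℤ) ((((d-1)*w + 1 + a : ℕ):ℤ) + w))

/-- cardinality of the h-fold sumset of the level set -/
def fval (w d h a : ℕ) : ℕ :=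
  if d = 0 then h*(w+a) + 1
  else if h ≤ d then F0 w h
  else F0 w (d-1) + ((h-d)*((d-1)*w + 1 + a) + h*w + 1)

lemma card_level (w d h a : ℕ) (ha : 1 ≤ a) (haw : a ≤ w) :
    (h • Tset w d a).card = fval w d h a := by
  rcases Nat.eq_zero_or_pos d with hd | hd
  · subst hd
    simp only [Tset, fval, eq_self_iff_true, if_true]
    rw [nsmulIcc _ _ (by positivity), Int.card_Icc, mul_zero, sub_zero,
      show (h:ℤ) * ((w + a : ℕ):ℤ) + 1 = ((h*(w+a) + 1 : ℕ):ℤ) by push_cast; ring,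
      Int.toNat_natCast]
  · have hd0 : d ≠ 0 := by omega
    simp only [Tset, fval, if_neg hd0]
    rw [gadget_nsmul]
    rcases le_or_gt h d with hhd | hhd
    · rw [if_pos hhd]
      apply U_card_disjoint
      intro i hi
      have h' : i*w ≤ (d-1)*w := Nat.mul_le_mul_right w (by omega)
      linarith
    · rw [if_neg (by omega)]
      have hx2 : (d-1)*w + 1 + a ≤ ((d-1)+1)*w + 1 := by
        have h' : ((d-1)+1)*w = (d-1)*w + w := by ring
        rw [h']
        omega
      have := U_card_merged ((d-1)*w + 1 + a) w (d-1) h (by omega) hx2 (by omega)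
      rw [this]
      have hsub : h - (d-1) - 1 = h - d := by omega
      rw [hsub]

lemma Tset_subset (w d a : ℕ) : Tset w d a ⊆ Finset.Icc 0 (((d+1)*w + 1 + a : ℕ):ℤ) := by
  unfold Tset
  split
  · apply Finset.Icc_subset_Icc le_rfl
    have h' : 1*w ≤ (d+1)*w := Nat.mul_le_mul_right w (by omega)
    exact_mod_cast by linarith
  · intro z hz
    simp only [Finset.mem_insert, Finset.mem_Icc] at hz ⊢
    rcases hz with rfl | ⟨h1, h2⟩
    · constructor
      · rfl
      · positivity
    · refine ⟨le_trans (by positivity) h1, le_trans h2 ?_⟩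
      have : (d-1)*w + 1 + a + w ≤ (d+1)*w + 1 + a := by
        have : (d-1)*w + w ≤ (d+1)*w := by
          have : (d-1) + 1 ≤ d + 1 := by omega
          calc (d-1)*w + w = ((d-1)+1)*w := by ring
          _ ≤ (d+1)*w := Nat.mul_le_mul_right w this
        omega
      calc (((d-1)*w + 1 + a : ℕ):ℤ) + w = (((d-1)*w + 1 + a + w : ℕ):ℤ) := by push_cast; ring
      _ ≤ _ := by exact_mod_cast this

lemma nsmul_subset (h : ℕ) : ∀ {S T : Finset ℤ}, S ⊆ T → h • S ⊆ h • T := by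
  induction h with
  | zero => intro S T _; rw [zero_nsmul, zero_nsmul]
  | succ h ih => intro S T hST; rw [succ_nsmul, succ_nsmul]
                 exact Finset.add_subset_add (ih hST) hST

lemma nsmul_subset_Icc (S : Finset ℤ) (B : ℕ) (hS : S ⊆ Finset.Icc 0 ((B:ℕ):ℤ)) (h : ℕ) :
    h • S ⊆ Finset.Icc 0 (((h*B : ℕ)):ℤ) := by
  have := nsmul_subset h hS
  rwa [nsmulIcc _ _ (by positivity), mul_zero, show (h:ℤ) * ((B:ℕ):ℤ) = ((h*B : ℕ):ℤ) by push_cast; ring] at this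

lemma fval_affine (w d h a : ℕ) (hd : d < h) :
    fval w d h a = fval w d h 0 + (h-d)*a := by
  rcases Nat.eq_zero_or_pos d with rfl | hd0
  · simp only [fval, eq_self_iff_true, if_true]
    have h' : h*(w+a) = h*(w+0) + h*a := by ring
    have h'' : h - 0 = h := by omega
    rw [h'', h']
    ring
  · have hd0' : d ≠ 0 := by omega
    simp only [fval, if_neg hd0', if_neg (by omega : ¬ h ≤ d)]
    have h' : (h-d)*((d-1)*w + 1 + a) = (h-d)*((d-1)*w + 1 + 0) + (h-d)*a := by ring
    rw [h']
    ring

lemma F0_le (w k : ℕ) : F0 w k ≤ (k+1)*(k*w+1) := by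
  unfold F0
  calc ∑ i ∈ Finset.range (k+1), (i*w+1) ≤ ∑ i ∈ Finset.range (k+1), (k*w+1) := by
        apply Finset.sum_le_sum
        intro i hi
        simp only [Finset.mem_range] at hi
        have : i*w ≤ k*w := Nat.mul_le_mul_right w (by omega)
        omega
  _ = (k+1)*(k*w+1) := by rw [Finset.sum_const, Finset.card_range, smul_eq_mul]

lemma F0_pos (w k : ℕ) : 1 ≤ F0 w k := by
  unfold F0
  have : 0 < ∑ i ∈ Finset.range (k+1), (i*w+1) :=
    Finset.sum_pos (fun i _ => by omega) ⟨0, by simp⟩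
  omega

lemma fval_lower (w d h a H : ℕ) (hd : d < h) (hh1 : 1 ≤ h) : w ≤ fval w d h a := by
  rcases Nat.eq_zero_or_pos d with rfl | hd0
  · simp only [fval, eq_self_iff_true, if_true]
    have h1 : 1*w ≤ h*w := Nat.mul_le_mul_right w hh1
    have h2 : h*w ≤ h*(w+a) := Nat.mul_le_mul_left h (by omega)
    calc w = 1*w := (Nat.one_mul w).symm
    _ ≤ h*w := h1
    _ ≤ h*(w+a) := h2
    _ ≤ h*(w+a) + 1 := by omega
  · simp only [fval, if_neg (by omega : ¬ d = 0), if_neg (by omega : ¬ h ≤ d)]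
    have h1 : 1*w ≤ h*w := Nat.mul_le_mul_right w hh1
    calc w = 1*w := (Nat.one_mul w).symm
    _ ≤ h*w := h1
    _ ≤ F0 w (d-1) + ((h-d)*((d-1)*w + 1 + a) + h*w + 1) := by omega

lemma fval_upper (w d h a H : ℕ) (hd : d < h) (hh : h ≤ H) (haw : a ≤ w) (hw : 1 ≤ w) :
    fval w d h a ≤ 3*(H+2)^2*w := by
  have hdH : d + 1 ≤ H := by omega
  rcases Nat.eq_zero_or_pos d with rfl | hd0
  · simp only [fval, eq_self_iff_true, if_true]
    have h1 : h*(w+a) ≤ H*(2*w) := Nat.mul_le_mul hh (by omega)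
    have e1 : H*(2*w) = 2*(H*w) := by ring
    have e2 : 3*(H+2)^2*w = 3*(H*(H*w)) + 12*(H*w) + 12*w := by ring
    have e3 : 1 ≤ H*w := Nat.mul_pos (by omega) (by omega)
    have e4 : H*w ≤ H*(H*w) := Nat.le_mul_of_pos_left _ (by omega)
    linarith
  · simp only [fval, if_neg (by omega : ¬ d = 0), if_neg (by omega : ¬ h ≤ d)]
    have h1 : F0 w (d-1) ≤ (H+1)*(H*w+1) := by
      refine le_trans (F0_le w (d-1)) (Nat.mul_le_mul (by omega) ?_)
      have h' : (d-1)*w ≤ H*w := Nat.mul_le_mul_right w (by omega)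
      linarith
    have h2 : (h-d)*((d-1)*w + 1 + a) ≤ H*(H*w + 1 + w) := by
      apply Nat.mul_le_mul (by omega)
      have h' : (d-1)*w ≤ H*w := Nat.mul_le_mul_right w (by omega)
      linarith
    have h3 : h*w ≤ H*w := Nat.mul_le_mul_right w hh
    have e1 : (H+1)*(H*w+1) = H*(H*w) + H*w + H + 1 := by ring
    have e2 : H*(H*w + 1 + w) = H*(H*w) + H + H*w := by ring
    have e3 : 3*(H+2)^2*w = 3*(H*(H*w)) + 12*(H*w) + 12*w := by ring
    have e4 : 1 ≤ H*w := Nat.mul_pos (by omega) (by omega)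
    have e5 : H ≤ H*w := Nat.le_mul_of_pos_right _ (by omega)
    have e6 : H*w ≤ H*(H*w) := Nat.le_mul_of_pos_left _ (by omega)
    linarith

/-- product perturbation bound -/
lemma prodPerturb (M : ℕ) : ∀ (r : ℕ) (u v e : ℕ → ℕ),
    (∀ d, d < r → v d ≤ u d + e d) → (∀ d, d < r → u d ≤ M ∧ v d ≤ M) →
    ∏ d ∈ Finset.range r, v d ≤
      (∏ d ∈ Finset.range r, u d) + (∑ d ∈ Finset.range r, e d) * M^(r-1) := by
  intro r
  induction r with
  | zero => intro u v e _ _; simp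
  | succ r ih =>
      intro u v e hclose hbound
      rcases Nat.eq_zero_or_pos r with rfl | hr
      · simpa using hclose 0 (by omega)
      · have hvM : ∏ d ∈ Finset.range r, v d ≤ M^r := by
          calc ∏ d ∈ Finset.range r, v d ≤ ∏ _d ∈ Finset.range r, M :=
                Finset.prod_le_prod (fun _ _ => by omega)
                  (fun d hd => (hbound d (by simp only [Finset.mem_range] at hd; omega)).2)
          _ = M^r := by rw [Finset.prod_const, Finset.card_range]
        have hIH := ih u v e (fun d hd => hclose d (by omega)) (fun d hd => hbound d (by omega))
        rw [Finset.prod_range_succ, Finset.prod_range_succ, Finset.sum_range_succ]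
        calc (∏ d ∈ Finset.range r, v d) * v r
            ≤ (∏ d ∈ Finset.range r, v d) * (u r + e r) :=
              Nat.mul_le_mul_left _ (hclose r (by omega))
        _ = (∏ d ∈ Finset.range r, v d) * u r + (∏ d ∈ Finset.range r, v d) * e r := by ring
        _ ≤ ((∏ d ∈ Finset.range r, u d) + (∑ d ∈ Finset.range r, e d) * M^(r-1)) * u r
              + M^r * e r := by
            exact Nat.add_le_add (Nat.mul_le_mul_right _ hIH) (Nat.mul_le_mul_right _ hvM)
        _ ≤ (∏ d ∈ Finset.range r, u d) * u r
              + ((∑ d ∈ Finset.range r, e d) + e r) * M^(r+1-1) := by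
            have h1 : (∑ d ∈ Finset.range r, e d) * M^(r-1) * u r
                ≤ (∑ d ∈ Finset.range r, e d) * M^r := by
              calc (∑ d ∈ Finset.range r, e d) * M^(r-1) * u r
                  ≤ (∑ d ∈ Finset.range r, e d) * M^(r-1) * M :=
                    Nat.mul_le_mul_left _ (hbound r (by omega)).1
              _ = (∑ d ∈ Finset.range r, e d) * (M^(r-1) * M) := by ring
              _ = (∑ d ∈ Finset.range r, e d) * M^r := by
                  rw [← pow_succ]
                  congr 2
                  omega
            have h2 : r + 1 - 1 = r := by omega
            rw [h2]
            ring_nf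
            nlinarith [h1]
        _ = _ := by ring

/-- key strict comparison of perturbed products -/
lemma keyCompare (r M w gap : ℕ) (u v e : ℕ → ℕ)
    (hclose : ∀ d, d < r → v d ≤ u d + e d)
    (hbound : ∀ d, d ≤ r → u d ≤ M ∧ v d ≤ M)
    (hlow : ∀ d, d < r → w ≤ u d)
    (hgap : v r + gap ≤ u r)
    (hsize : (∑ d ∈ Finset.range r, e d) * M^r < gap * w^r) :
    ∏ d ∈ Finset.range (r+1), v d < ∏ d ∈ Finset.range (r+1), u d := by
  rw [Finset.prod_range_succ, Finset.prod_range_succ]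
  have hwu : w^r ≤ ∏ d ∈ Finset.range r, u d := by
    calc w^r = ∏ _d ∈ Finset.range r, w := by rw [Finset.prod_const, Finset.card_range]
    _ ≤ _ := Finset.prod_le_prod (fun _ _ => by omega) (fun d hd => hlow d (by simp at hd; omega))
  have hvM : ∏ d ∈ Finset.range r, v d ≤ M^r := by
    calc ∏ d ∈ Finset.range r, v d ≤ ∏ _d ∈ Finset.range r, M :=
          Finset.prod_le_prod (fun _ _ => by omega)
            (fun d hd => (hbound d (by simp at hd; omega)).2)
    _ = M^r := by rw [Finset.prod_const, Finset.card_range]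
  have hIH := prodPerturb M r u v e hclose (fun d hd => hbound d (by omega))
  have hEM : (∑ d ∈ Finset.range r, e d) * M^(r-1) * v r
      ≤ (∑ d ∈ Finset.range r, e d) * M^r := by
    rcases Nat.eq_zero_or_pos r with rfl | hr
    · simp
    · calc (∑ d ∈ Finset.range r, e d) * M^(r-1) * v r
          ≤ (∑ d ∈ Finset.range r, e d) * M^(r-1) * M :=
            Nat.mul_le_mul_left _ (hbound r le_rfl).2
      _ = (∑ d ∈ Finset.range r, e d) * (M^(r-1)*M) := by ring
      _ = (∑ d ∈ Finset.range r, e d) * M^r := by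
          rw [← pow_succ]; congr 2; omega
  calc (∏ d ∈ Finset.range r, v d) * v r
      ≤ ((∏ d ∈ Finset.range r, u d) + (∑ d ∈ Finset.range r, e d) * M^(r-1)) * v r :=
        Nat.mul_le_mul_right _ hIH
  _ = (∏ d ∈ Finset.range r, u d) * v r + (∑ d ∈ Finset.range r, e d) * M^(r-1) * v r := by ring
  _ ≤ (∏ d ∈ Finset.range r, u d) * v r + (∑ d ∈ Finset.range r, e d) * M^r :=
      Nat.add_le_add_left hEM _
  _ < (∏ d ∈ Finset.range r, u d) * v r + gap * w^r := by omega
  _ ≤ (∏ d ∈ Finset.range r, u d) * v r + gap * (∏ d ∈ Finset.range r, u d) :=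
      Nat.add_le_add_left (Nat.mul_le_mul_left _ hwu) _
  _ = (∏ d ∈ Finset.range r, u d) * (v r + gap) := by ring
  _ ≤ (∏ d ∈ Finset.range r, u d) * u r := Nat.mul_le_mul_left _ hgap

/-- geometric sum bound -/
lemma geomBound (Q : ℕ) (hQ : 2 ≤ Q) : ∀ r : ℕ, ∑ d ∈ Finset.range r, Q^(d+1) ≤ 2*Q^r := by
  intro r
  induction r with
  | zero => simp
  | succ r ih =>
      rw [Finset.sum_range_succ]
      have h1 : 2*Q^r ≤ Q*Q^r := Nat.mul_le_mul_right _ hQ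
      have h2 : Q^(r+1) = Q*Q^r := by rw [pow_succ]; ring
      omega
lemma scaledSum_range_card (c : ℤ) (hc : 0 < c) :
    ∀ (m : ℕ) (g : ℕ → Finset ℤ),
    (∀ d, d < m → ∀ x ∈ g d, 0 ≤ x ∧ x < c) →
    (scaledSum c ((List.range m).map g)).card = ∏ d ∈ Finset.range m, (g d).card := by
  intro m
  induction m with
  | zero => intro g _; simp [scaledSum]
  | succ m ih =>
      intro g hg
      rw [List.range_succ_eq_map, List.map_cons, List.map_map]
      show (g 0 + dil c (scaledSum c ((List.range m).map (g ∘ Nat.succ)))).card = _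
      rw [card_add_dil c _ _ (hg 0 (by omega)),
        ih (g ∘ Nat.succ) (fun d hd => hg (d+1) (by omega)),
        Finset.prod_range_succ']
      simp [Function.comp_def, Nat.succ_eq_add_one, Nat.mul_comm]

lemma scaledSum_range_nsmul (c : ℤ) (h m : ℕ) (g : ℕ → Finset ℤ) :
    h • scaledSum c ((List.range m).map g)
      = scaledSum c ((List.range m).map (fun d => h • g d)) := by
  rw [nsmul_scaledSum, List.map_map]
  rfl

lemma scaledSum_range_subset (c : ℤ) (hc : 0 < c) (m : ℕ) (g : ℕ → Finset ℤ)
    (hg : ∀ d, d < m → ∀ x ∈ g d, 0 ≤ x ∧ x < c) :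
    ∀ z ∈ scaledSum c ((List.range m).map g), 0 ≤ z ∧ z < c ^ m := by
  intro z hz
  have := scaledSum_subset c hc ((List.range m).map g) ?cond z hz
  · rwa [List.length_map, List.length_range] at this
  case cond =>
    intro S hS
    rw [List.mem_map] at hS
    obtain ⟨d, hd, rfl⟩ := hS
    rw [List.mem_range] at hd
    exact hg d hd

/-- **Proposition 4 (characteristic zero).** Let `n, H ≥ 1`.  There exists
`N = N_∞(n,H)` such that for any permutations `σ_1, …, σ_H` of `{1, …, n}` there exist
subsets `A_1, …, A_n ⊆ [N] = {0, 1, …, N} ⊆ ℤ` such that for each `1 ≤ h ≤ H` the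
quantities `|hA_1|, …, |hA_n|` have the same relative order as `σ_h`. -/
theorem prop_characteristic_zero (n H : ℕ) (hn : 1 ≤ n) (hH : 1 ≤ H) :
    ∃ N : ℕ, ∀ σ : Fin H → Equiv.Perm (Fin n),
      ∃ A : Fin n → Finset ℤ,
        (∀ k, A k ⊆ Finset.Icc (0 : ℤ) (N : ℤ)) ∧
        ∀ h : ℕ, ∀ h1 : 1 ≤ h, ∀ hhH : h ≤ H, ∀ j k : Fin n,
          (h • A j).card < (h • A k).card ↔
            σ ⟨h - 1, by omega⟩ j < σ ⟨h - 1, by omega⟩ k := by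
  classical
  set K : ℕ := 3*(H+2)^2 with hKdef
  set Q : ℕ := 2*H*n*K^H + 2 with hQdef
  set w : ℕ := Q^(H+1) with hwdef
  set cN : ℕ := H*(H+2)*w + 1 with hcNdef
  have hQ2 : 2 ≤ Q := by omega
  have hK1 : 1 ≤ K := by
    have : 0 < K := by rw [hKdef]; positivity
    omega
  have hw1 : 1 ≤ w := Nat.one_le_pow _ _ (by omega)
  have hnQ : n ≤ Q := by
    have h1 : 1 ≤ K^H := Nat.one_le_pow _ _ (by omega)
    calc n = 1*n*1 := by ring
    _ ≤ 2*H*n*K^H := Nat.mul_le_mul (Nat.mul_le_mul (by omega) le_rfl) h1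
    _ ≤ Q := by omega
  refine ⟨cN^H, ?_⟩
  intro σ
  set aval : ℕ → Fin n → ℕ :=
    fun d j => if hd : d < H then Q^(d+1)*(((σ ⟨d, hd⟩ j) : ℕ)+1) else 1 with havaldef
  have haval_pos : ∀ d j, 1 ≤ aval d j := by
    intro d j
    simp only [havaldef]
    split
    · have h2 : 1 ≤ Q^(d+1) := Nat.one_le_pow _ _ (by omega)
      exact le_trans h2 (Nat.le_mul_of_pos_right _ (by omega))
    · exact le_refl 1
  have haval_le : ∀ d j, aval d j ≤ w := by
    intro d j
    simp only [havaldef]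
    split
    · rename_i hd
      calc Q^(d+1)*(((σ ⟨d, hd⟩ j) : ℕ)+1) ≤ Q^H * n := by
            apply Nat.mul_le_mul
            · exact Nat.pow_le_pow_right (by omega) (by omega)
            · have := (σ ⟨d, hd⟩ j).isLt; omega
      _ ≤ Q^H * Q := Nat.mul_le_mul_left _ hnQ
      _ = Q^(H+1) := by rw [pow_succ]
    · exact hw1
  set A : Fin n → Finset ℤ :=
    fun j => scaledSum (cN:ℤ) ((List.range H).map (fun d => Tset w d (aval d j))) with hAdef
  have hcN0 : (0:ℤ) < (cN:ℤ) := by positivity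
  -- element bound for the nsmul of level sets
  have hTbound : ∀ h : ℕ, h ≤ H → ∀ d < H, ∀ j, ∀ z ∈ h • Tset w d (aval d j),
      0 ≤ z ∧ z < (cN:ℤ) := by
    intro h hh d hd j z hz
    have hsub := nsmul_subset_Icc (Tset w d (aval d j)) ((d+1)*w + 1 + aval d j)
      (Tset_subset w d (aval d j)) h
    have hz' := hsub hz
    simp only [Finset.mem_Icc] at hz'
    refine ⟨hz'.1, lt_of_le_of_lt hz'.2 ?_⟩
    have hb : h*((d+1)*w + 1 + aval d j) < cN := by
      have h1 : (d+1)*w ≤ H*w := Nat.mul_le_mul_right w (by omega)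
      have h2 : h*((d+1)*w + 1 + aval d j) ≤ H*(H*w + 1 + w) := by
        apply Nat.mul_le_mul hh
        have := haval_le d j
        omega
      have h3 : H*(H*w + 1 + w) = H*(H*w) + H + H*w := by ring
      have h4 : H ≤ H*w := Nat.le_mul_of_pos_right _ (by omega)
      have h5 : H*(H+2)*w = H*(H*w) + 2*(H*w) := by ring
      omega
    exact_mod_cast hb
  -- the one-shot cardinality formula
  have hcard : ∀ h : ℕ, 1 ≤ h → h ≤ H → ∀ j,
      (h • A j).card = ∏ d ∈ Finset.range H, fval w d h (aval d j) := by
    intro h h1 hh j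
    rw [hAdef]
    simp only
    rw [scaledSum_range_nsmul, scaledSum_range_card (cN:ℤ) hcN0 H _
      (fun d hd => hTbound h hh d hd j)]
    apply Finset.prod_congr rfl
    intro d _
    exact card_level w d h (aval d j) (haval_pos d j) (haval_le d j)
  -- the main monotonicity claim
  have main : ∀ h : ℕ, ∀ (h1 : 1 ≤ h) (hh : h ≤ H) (j k : Fin n)
      (hp : h - 1 < H),
      σ ⟨h-1, hp⟩ j < σ ⟨h-1, hp⟩ k → (h • A j).card < (h • A k).card := by
    intro h h1 hh j k hp hjk
    rw [hcard h h1 hh j, hcard h h1 hh k]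
    -- split into head (range h) and tail (Ico h H)
    have hsplit : ∀ i : Fin n, ∏ d ∈ Finset.range H, fval w d h (aval d i)
        = (∏ d ∈ Finset.range h, fval w d h (aval d i))
          * ∏ d ∈ Finset.Ico h H, fval w d h (aval d i) := by
      intro i
      simp only [Finset.range_eq_Ico]
      exact (Finset.prod_Ico_consecutive _ (Nat.zero_le h) hh).symm
    rw [hsplit j, hsplit k]
    have htail : ∀ i : Fin n, ∏ d ∈ Finset.Ico h H, fval w d h (aval d i)
        = ∏ d ∈ Finset.Ico h H, F0 w h := by
      intro i
      apply Finset.prod_congr rfl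
      intro d hd
      simp only [Finset.mem_Ico] at hd
      have hd0 : d ≠ 0 := by omega
      simp only [fval, if_neg hd0, if_pos (by omega : h ≤ d)]
    rw [htail j, htail k]
    have htailpos : 0 < ∏ d ∈ Finset.Ico h H, F0 w h :=
      Finset.prod_pos (fun d _ => F0_pos w h)
    apply (Nat.mul_lt_mul_right htailpos).2
    -- head comparison via keyCompare
    obtain ⟨r, rfl⟩ : ∃ r, h = r + 1 := ⟨h-1, by omega⟩
    have hrH : r < H := by omega
    have hr1 : r + 1 - 1 = r := by omega
    apply keyCompare r (K*w) w (Q^(r+1))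
      (fun d => fval w d (r+1) (aval d k)) (fun d => fval w d (r+1) (aval d j))
      (fun d => H*n*Q^(d+1))
    · -- hclose
      intro d hd
      have hdr : d < r + 1 := by omega
      rw [fval_affine w d (r+1) (aval d j) hdr, fval_affine w d (r+1) (aval d k) hdr]
      have h1' : (r+1-d)*(aval d j) ≤ H*n*Q^(d+1) := by
        have ha : aval d j ≤ Q^(d+1)*n := by
          simp only [havaldef]
          rw [dif_pos (by omega : d < H)]
          apply Nat.mul_le_mul_left
          have := (σ ⟨d, by omega⟩ j).isLt
          omega
        calc (r+1-d)*(aval d j) ≤ H*(Q^(d+1)*n) := Nat.mul_le_mul (by omega) ha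
        _ = H*n*Q^(d+1) := by ring
      omega
    · -- hbound
      intro d hd
      constructor <;>
        exact fval_upper w d (r+1) _ H (by omega) hh (haval_le d _) hw1
    · -- hlow
      intro d hd
      exact fval_lower w d (r+1) _ H (by omega) (by omega)
    · -- hgap
      rw [fval_affine w r (r+1) (aval r j) (by omega),
        fval_affine w r (r+1) (aval r k) (by omega)]
      have hco : r + 1 - r = 1 := by omega
      rw [hco]
      have haj : aval r j = Q^(r+1)*(((σ ⟨r, hrH⟩ j) : ℕ)+1) := by
        simp only [havaldef]; rw [dif_pos hrH]
      have hak : aval r k = Q^(r+1)*(((σ ⟨r, hrH⟩ k) : ℕ)+1) := by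
        simp only [havaldef]; rw [dif_pos hrH]
      have hσ : ((σ ⟨r, hrH⟩ j) : ℕ) + 1 ≤ ((σ ⟨r, hrH⟩ k) : ℕ) := by
        have : σ ⟨r, hrH⟩ j < σ ⟨r, hrH⟩ k := by
          convert hjk using 3 <;> simp
        exact this
      have : aval r j + Q^(r+1) ≤ aval r k := by
        rw [haj, hak]
        calc Q^(r+1)*(((σ ⟨r, hrH⟩ j) : ℕ)+1) + Q^(r+1)
            = Q^(r+1)*(((σ ⟨r, hrH⟩ j) : ℕ)+2) := by ring
        _ ≤ Q^(r+1)*(((σ ⟨r, hrH⟩ k) : ℕ)+1) := Nat.mul_le_mul_left _ (by omega)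
      omega
    · -- hsize
      have hsum : ∑ d ∈ Finset.range r, H*n*Q^(d+1) ≤ H*n*(2*Q^r) := by
        calc ∑ d ∈ Finset.range r, H*n*Q^(d+1) = H*n*∑ d ∈ Finset.range r, Q^(d+1) := by
              rw [Finset.mul_sum]
        _ ≤ H*n*(2*Q^r) := Nat.mul_le_mul_left _ (geomBound Q hQ2 r)
      have hKr : K^r ≤ K^H := Nat.pow_le_pow_right hK1 (by omega)
      have hQr0 : 0 < Q^r * w^r := by positivity
      calc (∑ d ∈ Finset.range r, H*n*Q^(d+1)) * (K*w)^r
          ≤ (H*n*(2*Q^r)) * (K^r * w^r) := by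
            rw [mul_pow]
            exact Nat.mul_le_mul_right _ hsum
      _ = (2*H*n*K^r) * (Q^r * w^r) := by ring
      _ ≤ (2*H*n*K^H) * (Q^r * w^r) := by
            apply Nat.mul_le_mul_right
            exact Nat.mul_le_mul_left _ hKr
      _ < Q * (Q^r * w^r) := by
            apply (Nat.mul_lt_mul_right hQr0).2
            omega
      _ = Q^(r+1) * w^r := by rw [pow_succ]; ring
  refine ⟨A, ?_, ?_⟩
  · -- subset
    intro k
    intro z hz
    have hb := scaledSum_range_subset (cN:ℤ) hcN0 H (fun d => Tset w d (aval d k)) ?bnd z hz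
    · simp only [Finset.mem_Icc]
      refine ⟨hb.1, ?_⟩
      have : ((cN:ℤ))^H = ((cN^H : ℕ) : ℤ) := by push_cast; ring
      rw [this] at hb
      omega
    case bnd =>
      intro d hd x hx
      have h1 : (1:ℕ) ≤ H := hH
      have := hTbound 1 hH d hd k x (by rwa [one_nsmul])
      exact this
  · -- the orderings
    intro h h1 hhH j k
    have hp : h - 1 < H := by omega
    constructor
    · intro hcardlt
      rcases lt_trichotomy (σ ⟨h-1, by omega⟩ j) (σ ⟨h-1, by omega⟩ k) with hlt | heq | hgt
      · exact hlt
      · exfalso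
        have : j = k := (σ ⟨h-1, by omega⟩).injective heq
        subst this
        exact lt_irrefl _ hcardlt
      · exfalso
        have := main h h1 hhH k j hp hgt
        omega
    · intro hlt
      exact main h h1 hhH j k hp hlt
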